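/- Let k > 0 and f ∈ L¹(0,1). The function x(t) = ∫_0^t (s/t)^k f(s) ds (extended by x(0)=0) satisfies x'(t) = -(k/t)x(t) + f(t) for almost every t ∈ (0,1] and x(0) = 0; moreover it is the unique solution of this Cauchy problem among functions x ∈ AC[0,1] with x(0) = 0 and ∫_0^1 |x(t)|/t dt < ∞. -/

import Mathlib

open MeasureTheory Set Filter Topology

lemma intpow (k u T : ℝ) (hk : 0 < k) (hu : 0 < u) (huT : u ≤ T) :
    ∫ σ in u..T, σ ^ (-k-1) = (u ^ (-k) - T ^ (-k)) / k := by
  rw [integral_rpow (Or.inr ⟨by intro h; nlinarith, by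
    rw [uIcc_of_le huT]; intro h; exact absurd h.1 (by simp; linarith)⟩)]
  have : -k - 1 + 1 = -k := by ring
  rw [this]
  rw [div_eq_div_iff (by linarith) hk.ne']; ring

lemma cInt (k u T : ℝ) (hu : 0 < u) :
    IntegrableOn (fun σ : ℝ => σ ^ (-k-1)) (Icc u T) := by
  apply ContinuousOn.integrableOn_compact isCompact_Icc
  exact ContinuousOn.rpow_const continuousOn_id
    (fun σ hσ => Or.inl (ne_of_gt (lt_of_lt_of_le hu hσ.1)))

lemma cIcc (k u T : ℝ) (hk : 0 < k) (hu : 0 < u) (huT : u ≤ T) :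
    ∫ σ in Icc u T, k * σ ^ (-k-1) = u ^ (-k) - T ^ (-k) := by
  rw [MeasureTheory.integral_const_mul, MeasureTheory.integral_Icc_eq_integral_Ioc,
    ← intervalIntegral.integral_of_le huT, intpow k u T hk hu huT]
  field_simp

lemma negk_mul_k (u k : ℝ) (hu : 0 < u) : u ^ (-k) * u ^ k = 1 := by
  rw [← Real.rpow_add hu]; simp

lemma measRpow (c : ℝ) : Measurable (fun x : ℝ => x ^ c) := by measurability

lemma key (k T : ℝ) (hk : 0 < k) (hT : 0 < T) (φ : ℝ → ℝ) (hm : Measurable φ)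
    (hint : IntegrableOn φ (Ioc 0 T)) :
    IntegrableOn (fun σ => k * σ ^ (-k-1) * ∫ u in Ioc (0:ℝ) σ, u ^ k * φ u) (Ioc 0 T) ∧
    ∫ σ in Ioc (0:ℝ) T, k * σ ^ (-k-1) * ∫ u in Ioc (0:ℝ) σ, u ^ k * φ u
      = (∫ u in Ioc (0:ℝ) T, φ u) - T ^ (-k) * ∫ u in Ioc (0:ℝ) T, u ^ k * φ u := by
  set ν := volume.restrict (Ioc (0:ℝ) T) with hν
  set K : ℝ → ℝ → ℝ := fun σ u => if u ≤ σ then (k * σ ^ (-k-1)) * (u ^ k * φ u) else 0 with hK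
  have measK : Measurable (Function.uncurry K) := by
    apply Measurable.ite (measurableSet_le measurable_snd measurable_fst)
    · exact ((((measRpow (-k-1)).comp measurable_fst).const_mul k).mul
        (((measRpow k).comp measurable_snd).mul (hm.comp measurable_snd)))
    · exact measurable_const
  have hd : IntegrableOn (fun u => u ^ k * φ u) (Ioc 0 T) := by
    apply Integrable.mono' (hint.abs.const_mul (T ^ k))
      (((measRpow k).mul hm).aestronglyMeasurable)
    refine (ae_restrict_mem measurableSet_Ioc).mono fun u hu => ?_
    simp only [Pi.mul_apply]
    rw [norm_mul, Real.norm_rpow_of_nonneg hu.1.le, Real.norm_eq_abs,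
      Real.norm_eq_abs, abs_of_pos hu.1]
    exact mul_le_mul_of_nonneg_right (Real.rpow_le_rpow hu.1.le hu.2 hk.le) (abs_nonneg _)
  -- inner integral over u
  have inner1 : ∀ σ ∈ Ioc (0:ℝ) T, (∫ u, K σ u ∂ν)
      = k * σ ^ (-k-1) * ∫ u in Ioc (0:ℝ) σ, u ^ k * φ u := by
    intro σ hσ
    have h1 : ∀ u, K σ u = (Iic σ).indicator (fun u => (k * σ ^ (-k-1)) * (u ^ k * φ u)) u := by
      intro u; rw [indicator_apply]; rfl
    simp_rw [h1]
    rw [hν, integral_indicator measurableSet_Iic, Measure.restrict_restrict measurableSet_Iic]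
    have h2 : Iic σ ∩ Ioc 0 T = Ioc 0 σ := by
      ext u; simp only [mem_inter_iff, mem_Iic, mem_Ioc]
      exact ⟨fun ⟨a, b, c⟩ => ⟨b, a⟩, fun ⟨a, b⟩ => ⟨b, a, b.trans hσ.2⟩⟩
    rw [h2, MeasureTheory.integral_const_mul]
  -- inner integral over σ
  have inner2 : ∀ u ∈ Ioc (0:ℝ) T, (∫ σ, K σ u ∂ν)
      = (u ^ (-k) - T ^ (-k)) * (u ^ k * φ u) := by
    intro u hu
    have h1 : ∀ σ, K σ u = (Ici u).indicator (fun σ => (k * σ ^ (-k-1)) * (u ^ k * φ u)) σ := by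
      intro σ; rw [indicator_apply]; simp only [mem_Ici]; rfl
    simp_rw [h1]
    rw [hν, integral_indicator measurableSet_Ici, Measure.restrict_restrict measurableSet_Ici]
    have h2 : Ici u ∩ Ioc 0 T = Icc u T := by
      ext σ; simp only [mem_inter_iff, mem_Ici, mem_Ioc, mem_Icc]
      exact ⟨fun ⟨a, b, c⟩ => ⟨a, c⟩, fun ⟨a, b⟩ => ⟨a, hu.1.trans_le a, b⟩⟩
    rw [h2, MeasureTheory.integral_mul_const, cIcc k u T hk hu.1 hu.2]
  -- integrability on the product
  have hKint : Integrable (Function.uncurry K) (ν.prod ν) := by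
    refine ⟨measK.aestronglyMeasurable, ?_⟩
    rw [MeasureTheory.hasFiniteIntegral_iff_norm]
    rw [MeasureTheory.lintegral_prod_symm _ (measK.norm.ennreal_ofReal).aemeasurable]
    have hφfin : ∫⁻ u, ENNReal.ofReal ‖φ u‖ ∂ν < ⊤ := by
      rw [← MeasureTheory.hasFiniteIntegral_iff_norm]; exact hint.2
    refine lt_of_le_of_lt (MeasureTheory.lintegral_mono_ae ?_) hφfin
    filter_upwards [ae_restrict_mem measurableSet_Ioc] with u hu
    have step1 : ∀ᵐ σ ∂ν, ENNReal.ofReal ‖Function.uncurry K (σ, u)‖ ≤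
        (Ici u).indicator (fun σ => ENNReal.ofReal ((k * σ ^ (-k-1)) * (u ^ k * |φ u|))) σ := by
      filter_upwards [ae_restrict_mem measurableSet_Ioc] with σ hσ
      rw [indicator_apply]
      by_cases h : u ≤ σ
      · simp only [mem_Ici, h, if_pos]
        apply ENNReal.ofReal_le_ofReal
        have : Function.uncurry K (σ, u) = (k * σ ^ (-k-1)) * (u ^ k * φ u) := if_pos h
        rw [this, Real.norm_eq_abs, abs_mul, abs_mul, abs_mul, abs_of_pos hk,
          abs_of_nonneg (Real.rpow_nonneg hσ.1.le _),
          abs_of_nonneg (Real.rpow_nonneg hu.1.le _)]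
      · simp only [mem_Ici, h, if_neg, not_false_iff]
        have : Function.uncurry K (σ, u) = 0 := if_neg h
        simp [this]
    refine le_trans (MeasureTheory.lintegral_mono_ae step1) ?_
    rw [MeasureTheory.lintegral_indicator measurableSet_Ici,
      Measure.restrict_restrict measurableSet_Ici]
    have h2 : Ici u ∩ Ioc 0 T = Icc u T := by
      ext σ; simp only [mem_inter_iff, mem_Ici, mem_Ioc, mem_Icc]
      exact ⟨fun ⟨a, b, c⟩ => ⟨a, c⟩, fun ⟨a, b⟩ => ⟨a, hu.1.trans_le a, b⟩⟩
    rw [h2]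
    have congr1 : ∀ σ ∈ Icc u T, ENNReal.ofReal ((k * σ ^ (-k-1)) * (u ^ k * |φ u|))
        = ENNReal.ofReal (k * σ ^ (-k-1)) * ENNReal.ofReal (u ^ k * |φ u|) := by
      intro σ hσ
      exact ENNReal.ofReal_mul
        (mul_nonneg hk.le (Real.rpow_nonneg (lt_of_lt_of_le hu.1 hσ.1).le _))
    rw [MeasureTheory.setLIntegral_congr_fun measurableSet_Icc
      congr1]
    rw [MeasureTheory.lintegral_mul_const _ ((measRpow (-k-1)).const_mul k).ennreal_ofReal]
    have hce : ∫⁻ σ in Icc u T, ENNReal.ofReal (k * σ ^ (-k-1))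
        = ENNReal.ofReal (u ^ (-k) - T ^ (-k)) := by
      rw [← cIcc k u T hk hu.1 hu.2]
      rw [← MeasureTheory.ofReal_integral_eq_lintegral_ofReal
        ((cInt k u T hu.1).const_mul k)
        ((ae_restrict_mem measurableSet_Icc).mono fun σ hσ =>
          mul_nonneg hk.le (Real.rpow_nonneg (lt_of_lt_of_le hu.1 hσ.1).le _))]
    rw [hce, ← ENNReal.ofReal_mul (by
      have h3 : (0:ℝ) ≤ T ^ (-k) := Real.rpow_nonneg hT.le _
      have h4 : T ^ (-k) ≤ u ^ (-k) :=
        Real.rpow_le_rpow_of_nonpos hu.1 hu.2 (by linarith)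
      linarith)]
    apply ENNReal.ofReal_le_ofReal
    have hTk : (0:ℝ) ≤ T ^ (-k) := Real.rpow_nonneg hT.le _
    have hfin : (u ^ (-k) - T ^ (-k)) * (u ^ k * |φ u|) ≤ u ^ (-k) * (u ^ k * |φ u|) := by
      apply mul_le_mul_of_nonneg_right (by linarith)
        (mul_nonneg (Real.rpow_nonneg hu.1.le _) (abs_nonneg _))
    refine le_trans hfin ?_
    rw [← mul_assoc, negk_mul_k u k hu.1, one_mul, Real.norm_eq_abs]
  -- swap and conclude
  have swap := MeasureTheory.integral_integral_swap (f := K) hKint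
  have L : (∫ σ, (∫ u, K σ u ∂ν) ∂ν)
      = ∫ σ in Ioc (0:ℝ) T, k * σ ^ (-k-1) * ∫ u in Ioc (0:ℝ) σ, u ^ k * φ u :=
    MeasureTheory.setIntegral_congr_fun measurableSet_Ioc inner1
  have R : (∫ u, (∫ σ, K σ u ∂ν) ∂ν)
      = ∫ u in Ioc (0:ℝ) T, (u ^ (-k) - T ^ (-k)) * (u ^ k * φ u) :=
    MeasureTheory.setIntegral_congr_fun measurableSet_Ioc inner2
  have R2 : ∫ u in Ioc (0:ℝ) T, (u ^ (-k) - T ^ (-k)) * (u ^ k * φ u)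
      = (∫ u in Ioc (0:ℝ) T, φ u) - T ^ (-k) * ∫ u in Ioc (0:ℝ) T, u ^ k * φ u := by
    have he : EqOn (fun u => (u ^ (-k) - T ^ (-k)) * (u ^ k * φ u))
        (fun u => φ u - T ^ (-k) * (u ^ k * φ u)) (Ioc 0 T) := by
      intro u hu
      have h1 := negk_mul_k u k hu.1
      calc (u ^ (-k) - T ^ (-k)) * (u ^ k * φ u)
          = (u ^ (-k) * u ^ k) * φ u - T ^ (-k) * (u ^ k * φ u) := by ring
        _ = φ u - T ^ (-k) * (u ^ k * φ u) := by rw [h1]; ring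
    rw [MeasureTheory.setIntegral_congr_fun measurableSet_Ioc he,
      MeasureTheory.integral_sub hint (hd.const_mul _), MeasureTheory.integral_const_mul]
  constructor
  · exact (hKint.integral_prod_left).congr
      ((ae_restrict_mem measurableSet_Ioc).mono fun σ hσ => inner1 σ hσ)
  · rw [← L, swap, R, R2]

/-- For `k > 0`, `x t = ∫_0^t (s/t)^k f s ds` (with `x 0 = 0`) solves the Cauchy
problem `x' = -(k/t) x + f`, `x(0) = 0`, and is its unique solution in the space
`D₊ = {x ∈ AC[0,1] : x 0 = 0, ∫_0^1 |x t|/t dt < ∞}`. -/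
theorem stmt_7 (k : ℝ) (hk : 0 < k) (f x : ℝ → ℝ)
    (hf : IntegrableOn f (Ioc 0 1))
    (hx : ∀ t ∈ Ioc (0:ℝ) 1, x t = ∫ s in Ioc (0:ℝ) t, (s / t) ^ k * f s)
    (hx0 : x 0 = 0) :
    (∃ g : ℝ → ℝ, IntegrableOn g (Ioc 0 1) ∧
      (∀ᵐ t ∂(volume.restrict (Ioc (0:ℝ) 1)), g t = -(k / t) * x t + f t) ∧
      (∀ t ∈ Icc (0:ℝ) 1, x t = ∫ s in Ioc (0:ℝ) t, g s)) ∧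
    (∀ y : ℝ → ℝ, y 0 = 0 →
      IntegrableOn (fun t => |y t| / t) (Ioc 0 1) →
      (∃ g : ℝ → ℝ, IntegrableOn g (Ioc 0 1) ∧
        (∀ᵐ t ∂(volume.restrict (Ioc (0:ℝ) 1)), g t = -(k / t) * y t + f t) ∧
        (∀ t ∈ Icc (0:ℝ) 1, y t = ∫ s in Ioc (0:ℝ) t, g s)) →
      ∀ t ∈ Icc (0:ℝ) 1, y t = x t) := by
  obtain ⟨f', hf'sm, hff'⟩ := hf.aestronglyMeasurable
  have hf'm : Measurable f' := hf'sm.measurable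
  have hf' : IntegrableOn f' (Ioc 0 1) := hf.congr hff'
  -- representation of x
  have hxΦ : ∀ t ∈ Ioc (0:ℝ) 1, x t = t ^ (-k) * ∫ u in Ioc (0:ℝ) t, u ^ k * f' u := by
    intro t ht
    rw [hx t ht]
    have e1 : ∫ s in Ioc (0:ℝ) t, (s / t) ^ k * f s = ∫ s in Ioc (0:ℝ) t, (s / t) ^ k * f' s := by
      apply MeasureTheory.integral_congr_ae
      filter_upwards [ae_restrict_of_ae_restrict_of_subset (Ioc_subset_Ioc_right ht.2) hff']
        with s hs
      rw [hs]
    rw [e1]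
    have e2 : EqOn (fun s => (s / t) ^ k * f' s) (fun s => t ^ (-k) * (s ^ k * f' s))
        (Ioc 0 t) := by
      intro s hs
      simp only []
      rw [Real.div_rpow hs.1.le ht.1.le, Real.rpow_neg ht.1.le]
      ring
    rw [MeasureTheory.setIntegral_congr_fun measurableSet_Ioc e2,
      MeasureTheory.integral_const_mul]
  set g : ℝ → ℝ := fun t => -(k / t) * x t + f t with hg
  have key1 := key k 1 hk one_pos f' hf'm hf'
  have hEq : ∀ t ∈ Ioc (0:ℝ) 1,
      -(k * t ^ (-k-1) * ∫ u in Ioc (0:ℝ) t, u ^ k * f' u) = -(k / t) * x t := by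
    intro t ht
    rw [hxΦ t ht]
    have e5 : k / t * t ^ (-k) = k * t ^ (-k-1) := by
      rw [show -k-1 = -k + (-1) by ring, Real.rpow_add ht.1, Real.rpow_neg_one]
      field_simp
    calc -(k * t ^ (-k-1) * ∫ u in Ioc (0:ℝ) t, u ^ k * f' u)
        = -((k / t * t ^ (-k)) * ∫ u in Ioc (0:ℝ) t, u ^ k * f' u) := by rw [e5]
      _ = -(k / t) * (t ^ (-k) * ∫ u in Ioc (0:ℝ) t, u ^ k * f' u) := by ring
  have hsing : IntegrableOn (fun t => -(k / t) * x t) (Ioc 0 1) :=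
    (key1.1.neg).congr ((ae_restrict_mem measurableSet_Ioc).mono fun t ht => hEq t ht)
  have hgint : IntegrableOn g (Ioc 0 1) := hsing.add hf
  have hgeq : ∀ T ∈ Icc (0:ℝ) 1, x T = ∫ s in Ioc (0:ℝ) T, g s := by
    intro T hT
    rcases eq_or_lt_of_le hT.1 with h0 | h0
    · rw [← h0]; simp [hx0]
    · have hT' : T ∈ Ioc (0:ℝ) 1 := ⟨h0, hT.2⟩
      have keyT := key k T hk h0 f' hf'm (hf'.mono_set (Ioc_subset_Ioc_right hT.2))
      have hs' : IntegrableOn (fun t => -(k / t) * x t) (Ioc 0 T) :=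
        hsing.mono_set (Ioc_subset_Ioc_right hT.2)
      rw [hg]
      rw [MeasureTheory.integral_add hs' (hf.mono_set (Ioc_subset_Ioc_right hT.2))]
      have e3 : ∫ t in Ioc (0:ℝ) T, -(k / t) * x t
          = -((∫ u in Ioc (0:ℝ) T, f' u)
              - T ^ (-k) * ∫ u in Ioc (0:ℝ) T, u ^ k * f' u) := by
        rw [← MeasureTheory.setIntegral_congr_fun measurableSet_Ioc
          (fun t ht => hEq t ⟨ht.1, ht.2.trans hT.2⟩), MeasureTheory.integral_neg, keyT.2]
      have e4 : ∫ t in Ioc (0:ℝ) T, f t = ∫ t in Ioc (0:ℝ) T, f' t :=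
        MeasureTheory.integral_congr_ae
          (ae_restrict_of_ae_restrict_of_subset (Ioc_subset_Ioc_right hT.2) hff')
      rw [e3, e4, hxΦ T hT']
      ring
  have hxabs : IntegrableOn (fun t => |x t| / t) (Ioc 0 1) := by
    apply ((hsing.abs).const_mul (1/k)).congr
    filter_upwards [ae_restrict_mem measurableSet_Ioc] with t ht
    rw [abs_mul, abs_neg, abs_div, abs_of_pos hk, abs_of_pos ht.1]
    field_simp
  constructor
  · exact ⟨g, hgint, Filter.Eventually.of_forall fun t => rfl, hgeq⟩
  · rintro y hy0 hyint ⟨gy, hgyint, hgyae, hgyeq⟩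
    set z : ℝ → ℝ := fun t => y t - x t with hzdef
    set h : ℝ → ℝ := fun t => gy t - g t with hhdef
    have hhint : IntegrableOn h (Ioc 0 1) := hgyint.sub hgint
    have hzeq : ∀ T ∈ Icc (0:ℝ) 1, z T = ∫ s in Ioc (0:ℝ) T, h s := by
      intro T hT
      simp only [hzdef, hhdef]
      rw [hgyeq T hT, hgeq T hT,
        ← MeasureTheory.integral_sub (hgyint.mono_set (Ioc_subset_Ioc_right hT.2))
          (hgint.mono_set (Ioc_subset_Ioc_right hT.2))]
    have hzcont : ContinuousOn z (Icc 0 1) := by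
      have hchi : IntegrableOn h (Icc 0 1) := by
        rwa [integrableOn_Icc_iff_integrableOn_Ioc]
      exact (intervalIntegral.continuousOn_primitive hchi).congr hzeq
    have hae : ∀ᵐ t ∂(volume.restrict (Ioc (0:ℝ) 1)), h t = -(k / t) * z t := by
      filter_upwards [hgyae] with t h1
      simp only [hhdef, hg, hzdef, h1]
      ring
    have claim : ∀ ε ∈ Ioc (0:ℝ) 1, ∀ τ ∈ Icc ε 1, τ ^ k * z τ = ε ^ k * z ε := by
      intro ε hε
      set ψ : ℝ → ℝ := fun s => -(k / s) * z s with hψdef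
      have hψca : ∀ τ ∈ Ioo (0:ℝ) 1, ContinuousAt ψ τ := by
        intro τ hτ
        have hzc : ContinuousAt z τ :=
          hzcont.continuousAt (Icc_mem_nhds hτ.1 hτ.2)
        exact ((continuousAt_const.div continuousAt_id hτ.1.ne').neg).mul hzc
      have hψcont : ∀ a b : ℝ, 0 < a → b ≤ 1 → ContinuousOn ψ (Icc a b) := by
        intro a b ha hb
        apply ContinuousOn.mul
        · exact (continuousOn_const.div continuousOn_id
            fun s hs => (lt_of_lt_of_le ha hs.1).ne').neg
        · exact hzcont.mono fun s hs => ⟨ha.le.trans hs.1, hs.2.trans hb⟩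
      have hψii : ∀ a b : ℝ, 0 < a → a ≤ b → b ≤ 1 → IntervalIntegrable ψ volume a b := by
        intro a b ha hab hb
        apply ContinuousOn.intervalIntegrable
        rw [uIcc_of_le hab]
        exact hψcont a b ha hb
      have haeG : ∀ᵐ t ∂(volume : Measure ℝ), t ∈ Ioc (0:ℝ) 1 → h t = ψ t :=
        (ae_restrict_iff' measurableSet_Ioc).mp hae
      set Z : ℝ → ℝ := fun τ => z ε + ∫ s in ε..τ, ψ s with hZdef
      have hZeq : ∀ τ ∈ Icc ε 1, z τ = Z τ := by
        intro τ hτ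
        have hii0 : IntervalIntegrable h volume 0 τ := by
          rw [intervalIntegrable_iff_integrableOn_Ioc_of_le (hε.1.le.trans hτ.1)]
          exact hhint.mono_set (Ioc_subset_Ioc_right hτ.2)
        have hiiε : IntervalIntegrable h volume 0 ε := by
          rw [intervalIntegrable_iff_integrableOn_Ioc_of_le hε.1.le]
          exact hhint.mono_set (Ioc_subset_Ioc_right hε.2)
        have e1 : z τ - z ε = ∫ s in ε..τ, h s := by
          rw [hzeq τ ⟨hε.1.le.trans hτ.1, hτ.2⟩, hzeq ε ⟨hε.1.le, hε.2⟩,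
            ← intervalIntegral.integral_of_le (hε.1.le.trans hτ.1),
            ← intervalIntegral.integral_of_le hε.1.le]
          exact (intervalIntegral.integral_interval_sub_left hii0 hiiε).symm ▸ rfl
        have e2 : ∫ s in ε..τ, h s = ∫ s in ε..τ, ψ s := by
          apply intervalIntegral.integral_congr_ae
          filter_upwards [haeG] with s hs hmem
          apply hs
          rw [uIoc_of_le hτ.1] at hmem
          exact ⟨hε.1.trans hmem.1, hmem.2.trans hτ.2⟩
        simp only [hZdef]
        rw [← e2, ← e1]
        ring
      have hderivZ : ∀ τ ∈ Ico ε 1, HasDerivAt Z (ψ τ) τ := by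
        intro τ hτ
        have hτ' : τ ∈ Ioo (0:ℝ) 1 := ⟨hε.1.trans_le hτ.1, hτ.2⟩
        have hmeasAt : StronglyMeasurableAtFilter ψ (𝓝 τ) := by
          refine ⟨Ioo 0 1, Ioo_mem_nhds hτ'.1 hτ'.2, ?_⟩
          exact (continuousOn_of_forall_continuousAt fun s hs => hψca s hs).aestronglyMeasurable
            measurableSet_Ioo
        exact HasDerivAt.const_add _
          (intervalIntegral.integral_hasDerivAt_right
            (hψii ε τ hε.1 hτ.1 hτ'.2.le) hmeasAt (hψca τ hτ'))
      have hconst : ∀ τ ∈ Icc ε 1, τ ^ k * z τ = ε ^ k * z ε := by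
        have hF := constant_of_has_deriv_right_zero
          (f := fun τ : ℝ => τ ^ k * z τ) (a := ε) (b := 1)
          (ContinuousOn.mul (fun σ hσ => ((Real.continuousAt_rpow_const σ k
            (Or.inl (lt_of_lt_of_le hε.1 hσ.1).ne')).continuousWithinAt))
            (hzcont.mono fun σ hσ => ⟨hε.1.le.trans hσ.1, hσ.2⟩)) ?_
        · exact hF
        · intro τ hτ
          have hτ0 : (0:ℝ) < τ := hε.1.trans_le hτ.1
          have hdZ : HasDerivAt (fun σ => σ ^ k * Z σ)
              (k * τ ^ (k - 1) * Z τ + τ ^ k * ψ τ) τ :=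
            (Real.hasDerivAt_rpow_const (Or.inl hτ0.ne')).mul (hderivZ τ hτ)
          have hval : k * τ ^ (k - 1) * Z τ + τ ^ k * ψ τ = 0 := by
            rw [← hZeq τ ⟨hτ.1, hτ.2.le⟩]
            simp only [hψdef]
            rw [Real.rpow_sub_one hτ0.ne']
            field_simp
            ring
          rw [← hval]
          apply HasDerivWithinAt.congr_of_eventuallyEq hdZ.hasDerivWithinAt
          · have hmem : Ici τ ∩ Iio 1 ∈ 𝓝[Ici τ] τ :=
              Filter.inter_mem self_mem_nhdsWithin
                (mem_nhdsWithin_of_mem_nhds (Iio_mem_nhds hτ.2))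
            filter_upwards [hmem] with σ hσ
            rw [← hZeq σ ⟨hτ.1.trans hσ.1, hσ.2.le⟩]
          · rw [← hZeq τ ⟨hτ.1, hτ.2.le⟩]
      exact hconst
    have hCconst : ∀ t ∈ Ioc (0:ℝ) 1, t ^ k * z t = z 1 := by
      intro t ht
      have := (claim t ht 1 ⟨ht.2, le_refl 1⟩).symm
      rwa [Real.one_rpow, one_mul] at this
    have hz1 : z 1 = 0 := by
      by_contra hC0
      have hzt : ∀ t ∈ Ioc (0:ℝ) 1, |z t| / t = |z 1| * t ^ (-k-1) := by
        intro t ht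
        have hp : (0:ℝ) < t ^ k := Real.rpow_pos_of_pos ht.1 k
        have h2 : z t = z 1 * t ^ (-k) := by
          rw [Real.rpow_neg ht.1.le]
          rw [mul_comm, inv_mul_eq_div, eq_div_iff hp.ne']
          linear_combination hCconst t ht
        rw [h2, abs_mul, abs_of_nonneg (Real.rpow_nonneg ht.1.le (-k)),
          show -k-1 = -k + (-1) by ring, Real.rpow_add ht.1, Real.rpow_neg_one]
        field_simp
      have hzint : IntegrableOn (fun t => |z t| / t) (Ioc 0 1) := by
        apply Integrable.mono' (hyint.add hxabs)
        · apply ContinuousOn.aestronglyMeasurable _ measurableSet_Ioc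
          apply ContinuousOn.div
          · exact ((hzcont.mono Ioc_subset_Icc_self).abs)
          · exact continuousOn_id
          · exact fun t ht => ht.1.ne'
        · filter_upwards [ae_restrict_mem measurableSet_Ioc] with t ht
          rw [Real.norm_eq_abs, abs_div, abs_abs, abs_of_pos ht.1]
          simp only [Pi.add_apply]
          rw [← add_div]
          gcongr
          · exact ht.1.le
          · simp only [hzdef]
            exact abs_sub _ _
      have h6' : IntegrableOn (fun t : ℝ => |z 1| * t ^ (-k-1)) (Ioc (0:ℝ) 1) :=
        hzint.congr ((ae_restrict_mem measurableSet_Ioc).mono hzt)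
      have h6 : IntegrableOn (fun t : ℝ => |z 1| * t ^ (-k-1)) (Ioo (0:ℝ) 1) :=
        h6'.mono_set Ioo_subset_Ioc_self
      have h7 : IntegrableOn (fun t : ℝ => t ^ (-k-1)) (Ioo (0:ℝ) 1) := by
        have h8 := h6.const_mul (|z 1|)⁻¹
        apply h8.congr (Filter.Eventually.of_forall fun t => ?_)
        have : |z 1| ≠ 0 := fun hc => hC0 (abs_eq_zero.mp hc)
        field_simp
      rw [intervalIntegral.integrableOn_Ioo_rpow_iff one_pos] at h7
      linarith
    intro t ht
    rcases eq_or_lt_of_le ht.1 with h0 | h0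
    · rw [← h0, hy0, hx0]
    · have hc := hCconst t ⟨h0, ht.2⟩
      rw [hz1] at hc
      have hp : (0:ℝ) < t ^ k := Real.rpow_pos_of_pos h0 k
      have hz0 : z t = 0 := by
        rcases mul_eq_zero.mp hc with hb | hb
        · exact absurd hb hp.ne'
        · exact hb
      have := sub_eq_zero.mp hz0
      exact this
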